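/- Let k be a positive integer and let H, X, β, σ, τ be real numbers with 0 < H ≤ X, |σ| ≤ 3k, and 0 ≤ β ≤ 1. Then |(X+H)^{σ+iτ} − X^{σ+iτ}| ≤ 2^{10k}·X^{σ−β}·(|τ|+1)^β·H^β, where for a positive real t and complex exponent u, t^u denotes the principal complex power exp(u·log t). -/

import Mathlib

open scoped BigOperators Classical
open Filter Asymptotics

noncomputable section

/-- Value of the multiplicative function `r*_{4k}` at the prime power `p^l`. -/
def rstarPP (k p l : ℕ) : ℝ :=
  if p = 2 ∧ 1 ≤ l then
    (1 - (-1 : ℝ)^k / (1 - 2^(2*k-1))) * 2^(l*(2*k-1))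
      - (-1 : ℝ)^k * (1 - 2^(2*k)) / (1 - 2^(2*k-1))
  else (1 - (p : ℝ)^((l+1)*(2*k-1))) / (1 - (p : ℝ)^(2*k-1))

/-- The multiplicative function `r*_{4k}`, given by its values on prime powers. -/
def rstar (k n : ℕ) : ℝ := n.factorization.prod (fun p l => rstarPP k p l)

/-- The indicator function `1_S` of rationals having no `p`-adic valuation equal to `1`
outside of `S`. -/
def oneS (S : Finset ℕ) (q : ℚ) : ℝ :=
  if ∀ p : ℕ, p.Prime → p ∉ S → padicValRat p q ≠ 1 then 1 else 0

/-- `r_{4k}(d)`: the number of representations of `d` as a sum of `4k` squares. -/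
def rquad (k d : ℕ) : ℕ :=
  Set.ncard {y : Fin (4*k) → ℤ | ∑ i, (y i)^2 = (d : ℤ)}

/-- The divisor sum `S(X,Y)`. -/
def Ssum (k : ℕ) (S : Finset ℕ) (X Y : ℝ) : ℝ :=
  ∑ n ∈ Finset.Icc 1 ⌊X⌋₊, ∑ d ∈ (n^3).divisors.filter (fun d : ℕ => (d : ℝ) ≤ Y),
    rstar k d * oneS S ((n : ℚ)^2 / (d : ℚ))

/-- The divisor sum `T(B)`. -/
def Tsum (k : ℕ) (S : Finset ℕ) (B : ℝ) : ℝ :=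
  ∑ n ∈ Finset.Icc 1 ⌊B⌋₊, ∑ d ∈ (n^3).divisors.filter (fun d : ℕ => (d : ℝ) ≤ (n : ℝ)^3 / B),
    rstar k d * oneS S ((n : ℚ)^2 / (d : ℚ))

/-- `M(X,Y) = ∫₀^X ∫₀^Y S(x,y) dy dx`. -/
def Msum (k : ℕ) (S : Finset ℕ) (X Y : ℝ) : ℝ :=
  ∫ x in (0:ℝ)..X, ∫ y in (0:ℝ)..Y, Ssum k S x y

/-- Second difference `𝒟f(X₁,X₂;Y₁,Y₂)`. -/
def DD (f : ℝ → ℝ → ℝ) (X₁ X₂ Y₁ Y₂ : ℝ) : ℝ :=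
  f X₁ Y₁ + f X₂ Y₂ - f X₁ Y₂ - f X₂ Y₁

/-- The counting function `N*(B)` (no coprimality condition). -/
def Nstar (k : ℕ) (S : Finset ℕ) (B : ℝ) : ℕ :=
  Set.ncard {P : ℤ × (Fin (4*k) → ℤ) × ℤ |
    P.1 ≠ 0 ∧ P.1^3 = (∑ i, (P.2.1 i)^2) * P.2.2 ∧
    max (max |(P.1 : ℝ)| (Real.sqrt (∑ i, ((P.2.1 i : ℝ))^2))) |(P.2.2 : ℝ)| ≤ B ∧
    ∀ p : ℕ, p.Prime → p ∉ S →
      (padicValInt p P.2.2 : ℤ) - (padicValInt p P.1 : ℤ) ≠ 1}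

/-- The counting function `N(B)` of semi-integral points. -/
def Ncount (k : ℕ) (S : Finset ℕ) (B : ℝ) : ℕ :=
  Set.ncard {P : ℤ × (Fin (4*k) → ℤ) × ℤ |
    Int.gcd P.1 ((Int.gcd (Finset.univ.gcd P.2.1) P.2.2 : ℕ) : ℤ) = 1 ∧
    P.1 ≠ 0 ∧ P.1^3 = (∑ i, (P.2.1 i)^2) * P.2.2 ∧
    max (max |(P.1 : ℝ)| (Real.sqrt (∑ i, ((P.2.1 i : ℝ))^2))) |(P.2.2 : ℝ)| ≤ B ∧
    ∀ p : ℕ, p.Prime → p ∉ S →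
      (padicValInt p P.2.2 : ℤ) - (padicValInt p P.1 : ℤ) ≠ 1}

/-- The `a`-th term of the local series `F_p(s,w)`. -/
def FpTerm (k : ℕ) (S : Finset ℕ) (p : ℕ) (s w : ℂ) (a : ℕ) : ℂ :=
  if p ∈ S then
    (p : ℂ)^(-(a : ℂ) * s) *
      ∑ b ∈ Finset.range (3*a+1), (p : ℂ)^(-(b : ℂ) * w) * (rstar k (p^b) : ℂ)
  else
    (p : ℂ)^(-(a : ℂ) * s) *
      ∑ b ∈ (Finset.range (3*a+1)).filter (fun b : ℕ => (b : ℤ) ≠ 2*(a : ℤ) - 1),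
        (p : ℂ)^(-(b : ℂ) * w) * (rstar k (p^b) : ℂ)

/-- The local series `F_p(s,w)`. -/
def Fp (k : ℕ) (S : Finset ℕ) (p : ℕ) (s w : ℂ) : ℂ := ∑' a : ℕ, FpTerm k S p s w a

/-- The local factor `G_p(s,w)`. -/
def Gp (k : ℕ) (S : Finset ℕ) (p : ℕ) (s w : ℂ) : ℂ :=
  (1 - (p : ℂ)^(-s)) * (1 - (p : ℂ)^(-(s + 2*(w - 2*(k : ℂ) + 1)))) *
    (1 - (p : ℂ)^(-(s + 3*(w - 2*(k : ℂ) + 1)))) * Fp k S p s w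

/-- The Euler product `G_S(s,w)`. -/
def GS (k : ℕ) (S : Finset ℕ) (s w : ℂ) : ℂ :=
  ∏' p : Nat.Primes, Gp k S (p : ℕ) s w

/-- The double Dirichlet series `F(s,w)`. -/
def Ffun (k : ℕ) (S : Finset ℕ) (s w : ℂ) : ℂ :=
  ∑' n : ℕ, ∑ d ∈ (n^3).divisors,
    (rstar k d : ℂ) * (oneS S ((n : ℚ)^2 / (d : ℚ)) : ℂ) * (n : ℂ)^(-s) * (d : ℂ)^(-w)

/-- The local series `F_p(1, 2k-1)` (real-valued). -/
def FpOne (k : ℕ) (S : Finset ℕ) (p : ℕ) : ℝ :=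
  if p ∈ S then
    ∑' a : ℕ, ((p : ℝ)^a)⁻¹ *
      ∑ b ∈ Finset.range (3*a+1), ((p : ℝ)^(b*(2*k-1)))⁻¹ * rstar k (p^b)
  else
    ∑' a : ℕ, ((p : ℝ)^a)⁻¹ *
      ∑ b ∈ (Finset.range (3*a+1)).filter (fun b : ℕ => (b : ℤ) ≠ 2*(a : ℤ) - 1),
        ((p : ℝ)^(b*(2*k-1)))⁻¹ * rstar k (p^b)

/-- The constant `𝔠 = ∏_p (1-1/p)³ F_p(1,2k-1)`. -/
def cConst (k : ℕ) (S : Finset ℕ) : ℝ :=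
  ∏' p : Nat.Primes, (1 - ((p : ℕ) : ℝ)⁻¹)^3 * FpOne k S (p : ℕ)

open Complex

lemma aux1 (X t a : ℝ) (hX : 0 < X) (h1 : X ≤ t) (h2 : t ≤ 2*X) :
    t ^ a ≤ 2 ^ |a| * X ^ a := by
  have h2a : (1:ℝ) ≤ 2 ^ |a| := Real.one_le_rpow one_le_two (abs_nonneg a)
  rcases le_or_gt 0 a with ha | ha
  · calc t ^ a ≤ (2*X) ^ a := Real.rpow_le_rpow (le_trans hX.le h1) h2 ha
      _ = 2 ^ a * X ^ a := Real.mul_rpow (by norm_num) hX.le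
      _ ≤ 2 ^ |a| * X ^ a := by
          have := Real.rpow_le_rpow_of_exponent_le (one_le_two (α := ℝ)) (le_abs_self a)
          exact mul_le_mul_of_nonneg_right this (Real.rpow_pos_of_pos hX a).le
  · calc t ^ a ≤ X ^ a := Real.rpow_le_rpow_of_nonpos hX h1 ha.le
      _ ≤ 2 ^ |a| * X ^ a := by
          nth_rewrite 1 [← one_mul (X ^ a)]
          exact mul_le_mul_of_nonneg_right h2a (Real.rpow_pos_of_pos hX a).le

lemma aux_rpow_le_pow (a : ℝ) (m : ℕ) (h : a ≤ m) : (2:ℝ) ^ a ≤ 2 ^ m := by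
  calc (2:ℝ) ^ a ≤ (2:ℝ) ^ (m:ℝ) := Real.rpow_le_rpow_of_exponent_le one_le_two h
    _ = 2 ^ m := Real.rpow_natCast 2 m

lemma aux_nat (k : ℕ) : (3 * k : ℕ) ≤ 4 ^ k := by
  induction k with
  | zero => simp
  | succ n ih =>
    have h1 : (1:ℕ) ≤ 4 ^ n := Nat.one_le_pow _ _ (by norm_num)
    calc 3 * (n+1) = 3*n + 3 := by ring
      _ ≤ 4^n + 3 * 4^n := by omega
      _ = 4 ^ (n+1) := by ring

/-- `|(X+H)^{σ+iτ} − X^{σ+iτ}| ≤ 2^{10k}·X^{σ−β}·(|τ|+1)^β·H^β` for `0 < H ≤ X`,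
`|σ| ≤ 3k` and `β ∈ [0,1]`. -/
theorem cpow_difference_bound (k : ℕ) (hk : 0 < k) (H X β σ τ : ℝ)
    (hH : 0 < H) (hHX : H ≤ X) (hσ : |σ| ≤ 3 * (k : ℝ)) (hβ0 : 0 ≤ β) (hβ1 : β ≤ 1) :
    ‖((X + H : ℝ) : ℂ)^((σ : ℂ) + (τ : ℂ) * Complex.I) -
        ((X : ℝ) : ℂ)^((σ : ℂ) + (τ : ℂ) * Complex.I)‖ ≤
      2^(10*k) * X^(σ - β) * (|τ| + 1)^β * H^β := by
  have hX : 0 < X := hH.trans_le hHX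
  have hXH : 0 < X + H := by linarith
  set s : ℂ := (σ : ℂ) + (τ : ℂ) * Complex.I with hs_def
  have hsre : s.re = σ := by simp [hs_def]
  have hsim : s.im = τ := by simp [hs_def]
  have hsnorm : ‖s‖ ≤ |σ| + |τ| := by
    calc ‖s‖ ≤ ‖(σ:ℂ)‖ + ‖(τ:ℂ) * Complex.I‖ := norm_add_le _ _
      _ = |σ| + |τ| := by simp
  set D : ℝ := ‖((X + H : ℝ) : ℂ)^s - ((X : ℝ) : ℂ)^s‖ with hD_def
  have hD0 : 0 ≤ D := norm_nonneg _
  set M : ℝ := 2^(10*k) with hM_def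
  have hM0 : (0:ℝ) < M := by positivity
  have hτ1 : (0:ℝ) < |τ| + 1 := by positivity
  have hk1 : (1:ℝ) ≤ (k:ℝ) := by exact_mod_cast hk
  -- bound B : trivial
  have hB : D ≤ M * X ^ σ := by
    have h1 : ‖((X + H : ℝ) : ℂ)^s‖ = (X+H) ^ σ := by
      rw [Complex.norm_cpow_eq_rpow_re_of_pos hXH, hsre]
    have h2 : ‖((X : ℝ) : ℂ)^s‖ = X ^ σ := by
      rw [Complex.norm_cpow_eq_rpow_re_of_pos hX, hsre]
    have h3 : (X+H) ^ σ ≤ 2 ^ (3*k) * X ^ σ := by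
      calc (X+H) ^ σ ≤ 2 ^ |σ| * X ^ σ := aux1 X (X+H) σ hX (by linarith) (by linarith)
        _ ≤ 2 ^ (3*k) * X ^ σ := by
            refine mul_le_mul_of_nonneg_right ?_ (Real.rpow_pos_of_pos hX σ).le
            exact aux_rpow_le_pow |σ| (3*k) (by push_cast; linarith)
    have h4 : (2:ℝ) ^ (3*k) + 1 ≤ M := by
      rw [hM_def]
      have : (1:ℝ) ≤ 2 ^ (3*k) := one_le_pow₀ one_le_two
      calc (2:ℝ) ^ (3*k) + 1 ≤ 2 ^ (3*k) + 2 ^ (3*k) := by linarith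
        _ = 2 ^ (3*k+1) := by ring
        _ ≤ 2 ^ (10*k) := pow_le_pow_right₀ one_le_two (by omega)
    calc D ≤ ‖((X + H : ℝ) : ℂ)^s‖ + ‖((X : ℝ) : ℂ)^s‖ := norm_sub_le _ _
      _ = (X+H) ^ σ + X ^ σ := by rw [h1, h2]
      _ ≤ 2 ^ (3*k) * X ^ σ + 1 * X ^ σ := by
          refine add_le_add h3 ?_; rw [one_mul]
      _ = (2 ^ (3*k) + 1) * X ^ σ := by ring
      _ ≤ M * X ^ σ := mul_le_mul_of_nonneg_right h4 (Real.rpow_pos_of_pos hX σ).le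
  -- bound A : mean value
  have hA : D ≤ M * (X ^ (σ - 1) * ((|τ| + 1) * H)) := by
    by_cases hs0 : s = 0
    · have : D = 0 := by simp [hD_def, hs0, Complex.cpow_zero]
      rw [this]; positivity
    · set C : ℝ := (3*(k:ℝ) + |τ|) * (2 ^ (3*k+1) * X ^ (σ - 1)) with hC_def
      have hfuneq : (fun y : ℝ => s * (((y:ℝ):ℂ) ^ (s - 1 + 1) / (s - 1 + 1))) =
          fun y : ℝ => ((y:ℝ):ℂ) ^ s := by
        funext y
        rw [sub_add_cancel]
        field_simp
      have hderiv : ∀ t ∈ Set.Icc X (X+H),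
          HasDerivWithinAt (fun y : ℝ => ((y:ℝ):ℂ) ^ s) (s * ((t:ℝ):ℂ) ^ (s - 1))
            (Set.Icc X (X+H)) t := by
        intro t ht
        have ht0 : t ≠ 0 := (lt_of_lt_of_le hX ht.1).ne'
        have hr : s - 1 ≠ -1 := by
          intro h; apply hs0; have : s = 0 := by linear_combination h
          exact this
        have h := (hasDerivAt_ofReal_cpow_const' ht0 hr).const_mul s
        rw [hfuneq] at h
        exact h.hasDerivWithinAt
      have hbound : ∀ t ∈ Set.Icc X (X+H), ‖s * ((t:ℝ):ℂ) ^ (s - 1)‖ ≤ C := by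
        intro t ht
        have ht0 : 0 < t := lt_of_lt_of_le hX ht.1
        have hnorm : ‖s * ((t:ℝ):ℂ) ^ (s - 1)‖ = ‖s‖ * t ^ (σ - 1) := by
          rw [norm_mul, Complex.norm_cpow_eq_rpow_re_of_pos ht0]
          congr 2
          simp [hsre, Complex.sub_re]
        rw [hnorm, hC_def]
        refine mul_le_mul ?_ ?_ (Real.rpow_pos_of_pos ht0 _).le (by positivity)
        · calc ‖s‖ ≤ |σ| + |τ| := hsnorm
            _ ≤ 3*(k:ℝ) + |τ| := by linarith
        · calc t ^ (σ-1) ≤ 2 ^ |σ-1| * X ^ (σ-1) :=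
              aux1 X t (σ-1) hX ht.1 (le_trans ht.2 (by linarith))
            _ ≤ 2 ^ (3*k+1) * X ^ (σ-1) := by
                refine mul_le_mul_of_nonneg_right ?_ (Real.rpow_pos_of_pos hX _).le
                refine aux_rpow_le_pow _ _ ?_
                have := abs_sub_abs_le_abs_sub σ 1
                have h1 : |σ - 1| ≤ |σ| + |(1:ℝ)| := abs_sub _ _
                push_cast
                simp only [abs_one] at h1
                linarith
      have hmvt := Convex.norm_image_sub_le_of_norm_hasDerivWithin_le hderiv hbound
        (convex_Icc X (X+H)) (Set.left_mem_Icc.mpr (by linarith)) (Set.right_mem_Icc.mpr (by linarith))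
      have hDC : D ≤ C * H := by
        have : ‖(X+H) - X‖ = H := by rw [add_sub_cancel_left, Real.norm_eq_abs, abs_of_pos hH]
        calc D ≤ C * ‖(X+H) - X‖ := hmvt
          _ = C * H := by rw [this]
      have hCM : C ≤ M * (X ^ (σ-1) * (|τ| + 1)) := by
        have h5 : 3*(k:ℝ) + |τ| ≤ 3*(k:ℝ) * (|τ| + 1) := by nlinarith [abs_nonneg τ]
        have h6 : 3*(k:ℝ) * 2 ^ (3*k+1) ≤ M := by
          rw [hM_def]
          have h7 : (3*(k:ℝ)) ≤ 4 ^ k := by exact_mod_cast aux_nat k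
          have h8 : (4:ℝ) ^ k = 2 ^ (2*k) := by
            rw [pow_mul]; norm_num
          calc 3*(k:ℝ) * 2 ^ (3*k+1) ≤ 2 ^ (2*k) * 2 ^ (3*k+1) := by
                rw [← h8]; exact mul_le_mul_of_nonneg_right h7 (by positivity)
            _ = 2 ^ (5*k+1) := by rw [← pow_add]; ring_nf
            _ ≤ 2 ^ (10*k) := pow_le_pow_right₀ one_le_two (by omega)
        calc C = (3*(k:ℝ) + |τ|) * 2 ^ (3*k+1) * X ^ (σ-1) := by rw [hC_def]; ring
          _ ≤ (3*(k:ℝ) * (|τ|+1)) * 2 ^ (3*k+1) * X ^ (σ-1) := by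
              refine mul_le_mul_of_nonneg_right (mul_le_mul_of_nonneg_right h5 (by positivity)) ?_
              exact (Real.rpow_pos_of_pos hX _).le
          _ = (3*(k:ℝ) * 2 ^ (3*k+1)) * (X ^ (σ-1) * (|τ|+1)) := by ring
          _ ≤ M * (X ^ (σ-1) * (|τ|+1)) := by
              refine mul_le_mul_of_nonneg_right h6 ?_
              positivity
      calc D ≤ C * H := hDC
        _ ≤ M * (X ^ (σ-1) * (|τ|+1)) * H := mul_le_mul_of_nonneg_right hCM hH.le
        _ = M * (X ^ (σ-1) * ((|τ|+1) * H)) := by ring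
  -- interpolation
  have key : D ≤ (M * (X ^ (σ-1) * ((|τ|+1) * H))) ^ β * (M * X ^ σ) ^ (1-β) := by
    have h1 : D = D ^ β * D ^ (1-β) := by
      rw [← Real.rpow_add' hD0 (by norm_num)]; norm_num
    rw [h1]
    refine mul_le_mul (Real.rpow_le_rpow hD0 hA hβ0) (Real.rpow_le_rpow hD0 hB (by linarith))
      (Real.rpow_nonneg hD0 _) ?_
    positivity
  refine key.trans_eq ?_
  have e1 : (M * (X ^ (σ-1) * ((|τ|+1) * H))) ^ β =
      M ^ β * (X ^ ((σ-1)*β) * ((|τ|+1) ^ β * H ^ β)) := by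
    rw [Real.mul_rpow hM0.le (by positivity), Real.mul_rpow (by positivity) (by positivity),
      Real.mul_rpow hτ1.le hH.le, ← Real.rpow_mul hX.le]
  have e2 : (M * X ^ σ) ^ (1-β) = M ^ (1-β) * X ^ (σ*(1-β)) := by
    rw [Real.mul_rpow hM0.le (by positivity), ← Real.rpow_mul hX.le]
  rw [e1, e2]
  have hMM : M ^ β * M ^ (1-β) = M := by
    rw [← Real.rpow_add hM0]; norm_num
  have hXX : X ^ ((σ-1)*β) * X ^ (σ*(1-β)) = X ^ (σ - β) := by
    rw [← Real.rpow_add hX]; ring_nf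
  calc M ^ β * (X ^ ((σ-1)*β) * ((|τ|+1) ^ β * H ^ β)) * (M ^ (1-β) * X ^ (σ*(1-β)))
      = (M ^ β * M ^ (1-β)) * (X ^ ((σ-1)*β) * X ^ (σ*(1-β))) * (|τ|+1) ^ β * H ^ β := by ring
    _ = M * X ^ (σ-β) * (|τ|+1) ^ β * H ^ β := by rw [hMM, hXX]
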